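/- arXiv:2008.02497 — 3 statements merged into one kernel-verified Lean document; each statement's English description precedes it below -/
import Mathlib

section
/- If a Markov transition kernel T on a measurable space Θ satisfies a uniform (one-step) minorization condition T(θ, A) ≥ ε·λ(A) for all θ ∈ Θ and measurable A, where ε ∈ (0,1] and λ is a probability measure, then T admits a unique invariant probability measure π and for every θ and n ≥ 1, the total variation distance satisfies ‖Tⁿ(θ,·) − π‖_TV ≤ (1 − ε)ⁿ. -/
open MeasureTheory ProbabilityTheory
open Filter

/-- Total variation distance between two measures: the supremum over measurable
sets of the absolute difference of the masses. -/
noncomputable def tvDist {Θ : Type*} [MeasurableSpace Θ] (μ ν : Measure Θ) : ℝ :=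
  ⨆ A : {A : Set Θ // MeasurableSet A}, |(μ A).toReal - (ν A).toReal|

/-- `nStep T n` is the `n`-step transition kernel obtained by iterating `T`. -/
noncomputable def nStep {Θ : Type*} [MeasurableSpace Θ] (T : Kernel Θ Θ) : ℕ → Kernel Θ Θ
  | 0 => Kernel.id
  | n + 1 => T ∘ₖ nStep T n

set_option maxHeartbeats 1000000 in
/-- If a Markov kernel `T` satisfies the uniform minorization `T θ A ≥ ε·λ A`
with `ε ∈ (0,1]` and `λ` a probability measure, then `T` admits a unique invariant
probability measure `π` and `‖Tⁿ(θ,·) − π‖_TV ≤ (1 − ε)ⁿ` for all `θ` and `n ≥ 1`. -/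
theorem stmt0 {Θ : Type*} [MeasurableSpace Θ] (T : Kernel Θ Θ) [IsMarkovKernel T]
    (lam : Measure Θ) [IsProbabilityMeasure lam] (ε : ℝ) (hε : 0 < ε) (hε1 : ε ≤ 1)
    (hmin : ∀ θ : Θ, ∀ A : Set Θ, MeasurableSet A → ENNReal.ofReal ε * lam A ≤ T θ A) :
    ∃ π : Measure Θ, IsProbabilityMeasure π ∧ π.bind (fun θ => T θ) = π ∧
      (∀ π' : Measure Θ, IsProbabilityMeasure π' → π'.bind (fun θ => T θ) = π' → π' = π) ∧
      ∀ θ : Θ, ∀ n : ℕ, 1 ≤ n → tvDist (nStep T n θ) π ≤ (1 - ε) ^ n := by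
  classical
  set e : ENNReal := ENNReal.ofReal ε with he
  have he0 : e ≠ 0 := by simp [he, hε.le, ENNReal.ofReal_pos.mpr hε |>.ne']
  have heT : e ≠ ⊤ := ENNReal.ofReal_ne_top
  have he1 : e ≤ 1 := by simpa [he] using ENNReal.ofReal_le_one.mpr hε1
  -- residual "kernel"
  have hle : ∀ θ, e • lam ≤ T θ := fun θ => Measure.le_iff.mpr fun A hA => by
    simpa [Measure.smul_apply, smul_eq_mul] using hmin θ A hA
  set S : Θ → Measure Θ := fun θ => T θ - e • lam with hS
  haveI : IsFiniteMeasure (e • lam) :=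
    ⟨by rw [Measure.smul_apply]; exact ENNReal.mul_lt_top heT.lt_top (measure_lt_top _ _)⟩
  have hSapp : ∀ θ A, MeasurableSet A → S θ A = T θ A - e * lam A := fun θ A hA => by
    rw [hS]; rw [Measure.sub_apply hA (hle θ)]; simp [Measure.smul_apply, smul_eq_mul]
  have hTsplit : ∀ θ A, MeasurableSet A → T θ A = e * lam A + S θ A := fun θ A hA => by
    rw [hSapp θ A hA, add_comm, tsub_add_cancel_of_le (hmin θ A hA)]
  have hSmeas : Measurable S := by
    refine Measure.measurable_of_measurable_coe _ fun A hA => ?_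
    have : (fun θ => S θ A) = fun θ => T θ A - e * lam A := funext fun θ => hSapp θ A hA
    rw [this]
    exact (Kernel.measurable_coe T hA).sub measurable_const
  have hSuniv : ∀ θ, S θ Set.univ = 1 - e := fun θ => by
    rw [hSapp θ _ MeasurableSet.univ]; simp [measure_univ]
  -- the iterated residual measures starting from a measure
  set iter : Measure Θ → ℕ → Measure Θ := fun ν => fun n => (fun ρ => ρ.bind S)^[n] ν
    with hiter
  have iter_zero : ∀ ν, iter ν 0 = ν := fun ν => rfl
  have iter_succ : ∀ ν n, iter ν (n + 1) = (iter ν n).bind S := fun ν n =>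
    Function.iterate_succ_apply' _ n ν
  -- mass of iterates
  have iter_univ : ∀ (ν : Measure Θ), ν Set.univ = 1 → ∀ n, iter ν n Set.univ = (1 - e) ^ n := by
    intro ν hν n
    induction n with
    | zero => simpa [iter_zero]
    | succ n ih =>
      rw [iter_succ, Measure.bind_apply MeasurableSet.univ hSmeas.aemeasurable]
      calc ∫⁻ θ, S θ Set.univ ∂(iter ν n) = ∫⁻ _, (1 - e) ∂(iter ν n) := by
            simp only [hSuniv]
        _ = (1 - e) * (1 - e) ^ n := by rw [lintegral_const, ih, mul_comm]
        _ = (1 - e) ^ (n + 1) := by ring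
  have iter_le : ∀ (ν : Measure Θ), ν Set.univ = 1 → ∀ n A, iter ν n A ≤ (1 - e) ^ n :=
    fun ν hν n A => le_trans (measure_mono (Set.subset_univ A)) (le_of_eq (iter_univ ν hν n))
  -- μ sequence
  set μ : ℕ → Measure Θ := iter lam with hμ
  have hμ0 : μ 0 = lam := iter_zero lam
  have hμsucc : ∀ k, μ (k + 1) = (μ k).bind S := fun k => iter_succ lam k
  have hμuniv : ∀ n, μ n Set.univ = (1 - e) ^ n := iter_univ lam measure_univ
  have hμle : ∀ n A, μ n A ≤ (1 - e) ^ n := iter_le lam measure_univ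
  -- the candidate invariant measure
  set π : Measure Θ := e • Measure.sum μ with hπ
  have hπapp : ∀ A, MeasurableSet A → π A = e * ∑' n, μ n A := fun A hA => by
    rw [hπ, Measure.smul_apply, Measure.sum_apply _ hA, smul_eq_mul]
  have hgeom : ∑' n : ℕ, (1 - e) ^ n = e⁻¹ := by
    rw [ENNReal.tsum_geometric, ENNReal.sub_sub_cancel (by simp) he1]
  have hπuniv : π Set.univ = 1 := by
    rw [hπapp _ MeasurableSet.univ]
    simp only [hμuniv]
    rw [hgeom, ENNReal.mul_inv_cancel he0 heT]
  haveI hπprob : IsProbabilityMeasure π := ⟨hπuniv⟩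
  -- partial geometric sum identity
  have hpartial : ∀ n : ℕ, e * ∑ k ∈ Finset.range n, (1 - e) ^ k + (1 - e) ^ n = 1 := by
    intro n
    induction n with
    | zero => simp
    | succ n ih =>
      rw [Finset.sum_range_succ, mul_add, pow_succ]
      calc e * ∑ k ∈ Finset.range n, (1-e)^k + e * (1-e)^n + (1-e)^n * (1-e)
          = e * ∑ k ∈ Finset.range n, (1-e)^k + ((1-e)^n * e + (1-e)^n * (1-e)) := by ring
        _ = e * ∑ k ∈ Finset.range n, (1-e)^k + (1-e)^n * (e + (1-e)) := by rw [mul_add]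
        _ = e * ∑ k ∈ Finset.range n, (1-e)^k + (1-e)^n := by
            rw [add_tsub_cancel_of_le he1, mul_one]
        _ = 1 := ih
  -- splitting of a lintegral of T
  have hTint : ∀ (ν : Measure Θ) A, MeasurableSet A →
      ∫⁻ x, T x A ∂ν = e * lam A * ν Set.univ + ∫⁻ x, S x A ∂ν := by
    intro ν A hA
    have h1 : ∀ θ, T θ A = e * lam A + S θ A := fun θ => hTsplit θ A hA
    simp only [h1]
    rw [lintegral_add_left measurable_const, lintegral_const]
  -- the key one-step decomposition lemma
  have hstep : ∀ n (ρ : Measure Θ), ρ Set.univ = (1 - e) ^ n →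
      (e • (∑ k ∈ Finset.range n, μ k) + ρ).bind (fun θ => T θ)
        = e • (∑ k ∈ Finset.range (n + 1), μ k) + ρ.bind S := by
    intro n ρ hρ
    ext A hA
    rw [Measure.bind_apply hA (Kernel.measurable T).aemeasurable, lintegral_add_measure,
      lintegral_smul_measure, lintegral_finset_sum_measure]
    have hTμ : ∀ k ∈ Finset.range n, ∫⁻ x, T x A ∂(μ k)
        = e * lam A * (1 - e) ^ k + μ (k + 1) A := by
      intro k _
      rw [hTint (μ k) A hA, hμuniv k, hμsucc k, Measure.bind_apply hA hSmeas.aemeasurable]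
    rw [Finset.sum_congr rfl hTμ, hTint ρ A hA, hρ,
      ← Measure.bind_apply hA hSmeas.aemeasurable (f := S) (m := ρ)]
    rw [Measure.add_apply, Measure.smul_apply, Measure.finset_sum_apply, smul_eq_mul,
      Finset.sum_range_succ' (fun k => μ k A), hμ0]
    rw [Finset.sum_add_distrib]
    have harr : ∀ (G M L X : ENNReal),
        e * (e * L * G + M) + (L * e * (1-e)^n + X) = L * e * (e * G + (1-e)^n) + (e * M + X) :=
      fun G M L X => by ring
    calc e * (∑ k ∈ Finset.range n, e * lam A * (1-e)^k + ∑ k ∈ Finset.range n, μ (k+1) A)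
          + (e * lam A * (1-e)^n + (ρ.bind S) A)
        = e * (e * lam A * ∑ k ∈ Finset.range n, (1-e)^k + ∑ k ∈ Finset.range n, μ (k+1) A)
          + (lam A * e * (1-e)^n + (ρ.bind S) A) := by
          rw [← Finset.mul_sum]; ring_nf
      _ = lam A * e * (e * ∑ k ∈ Finset.range n, (1-e)^k + (1-e)^n)
          + (e * ∑ k ∈ Finset.range n, μ (k+1) A + (ρ.bind S) A) := harr _ _ _ _
      _ = e * (∑ k ∈ Finset.range n, μ (k+1) A + lam A) + (ρ.bind S) A := by
          rw [hpartial n]; ring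
  -- invariance of π
  have hinv : π.bind (fun θ => T θ) = π := by
    ext A hA
    rw [Measure.bind_apply hA (Kernel.measurable T).aemeasurable, hTint π A hA, hπuniv, mul_one]
    have hbindS : ∫⁻ x, S x A ∂π = e * ∑' k, μ (k + 1) A := by
      rw [hπ, lintegral_smul_measure, lintegral_sum_measure]
      congr 1
      refine tsum_congr fun k => ?_
      rw [hμsucc k, Measure.bind_apply hA hSmeas.aemeasurable]
    have hsplit0 : ∑' k, μ k A = μ 0 A + ∑' k, μ (k + 1) A :=
      tsum_eq_zero_add' ENNReal.summable
    rw [hbindS, hπapp A hA, hsplit0, hμ0, mul_add]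
  -- decomposition of the n-step kernel
  have hnstepM : ∀ θ n, nStep T n θ
      = e • (∑ k ∈ Finset.range n, μ k) + iter (Measure.dirac θ) n := by
    intro θ n
    induction n with
    | zero => simp [nStep, Kernel.id_apply, iter_zero]
    | succ n ih =>
      have : nStep T (n + 1) θ = (nStep T n θ).bind (fun θ => T θ) := by
        show (T ∘ₖ nStep T n) θ = _
        rw [Kernel.comp_apply]
      rw [this, ih, hstep n _ (iter_univ (Measure.dirac θ) (by simp) n), ← iter_succ]
  -- tail estimate
  have htail : ∀ n, e * ∑' k, μ (k + n) Set.univ ≤ (1 - e) ^ n := by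
    intro n
    calc e * ∑' k, μ (k + n) Set.univ ≤ e * ∑' k : ℕ, (1 - e) ^ (k + n) := by
          gcongr with k; exact hμle (k + n) _
      _ = e * (e⁻¹ * (1 - e) ^ n) := by
          congr 1
          simp only [pow_add]
          rw [ENNReal.tsum_mul_right, hgeom]
      _ = (1 - e) ^ n := by rw [← mul_assoc, ENNReal.mul_inv_cancel he0 heT, one_mul]
  have htailA : ∀ n A, e * ∑' k, μ (k + n) A ≤ (1 - e) ^ n := by
    intro n A
    refine le_trans (mul_le_mul_right
      (ENNReal.tsum_le_tsum fun k => measure_mono (Set.subset_univ A)) e) (htail n)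
  -- splitting π into head and tail
  have hπsplit : ∀ n A, MeasurableSet A →
      π A = e * ∑ k ∈ Finset.range n, μ k A + e * ∑' k, μ (k + n) A := by
    intro n A hA
    rw [hπapp A hA, ← Summable.sum_add_tsum_nat_add' (f := fun k => μ k A) (k := n) ENNReal.summable, mul_add]
  -- head sums are finite
  have hhead_le : ∀ n A, MeasurableSet A → e * ∑ k ∈ Finset.range n, μ k A ≤ 1 := by
    intro n A hA
    calc e * ∑ k ∈ Finset.range n, μ k A ≤ e * ∑' k, μ k A :=
          mul_le_mul_right (ENNReal.sum_le_tsum _) e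
      _ = π A := (hπapp A hA).symm
      _ ≤ 1 := prob_le_one
  -- uniqueness
  have huniq : ∀ π' : Measure Θ, IsProbabilityMeasure π' →
      π'.bind (fun θ => T θ) = π' → π' = π := by
    intro π' hπ' hinv'
    have hdec : ∀ n, π' = e • (∑ k ∈ Finset.range n, μ k) + iter π' n := by
      intro n
      induction n with
      | zero => simp [iter_zero]
      | succ n ih =>
        conv_lhs => rw [← hinv', ih]
        rw [hstep n _ (iter_univ π' measure_univ n), ← iter_succ]
    ext A hA
    have happ : ∀ n, π' A = e * ∑ k ∈ Finset.range n, μ k A + iter π' n A := by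
      intro n
      conv_lhs => rw [hdec n]
      rw [Measure.add_apply, Measure.smul_apply, Measure.finset_sum_apply, smul_eq_mul]
    have hone : (1 : ENNReal) - e < 1 :=
      ENNReal.sub_lt_self ENNReal.one_ne_top one_ne_zero he0
    have htend : ∀ c : ENNReal, Tendsto (fun n : ℕ => c + (1 - e) ^ n) atTop (nhds c) := by
      intro c
      have := (ENNReal.tendsto_pow_atTop_nhds_zero_of_lt_one hone).const_add c
      simpa using this
    refine le_antisymm ?_ ?_
    · refine ge_of_tendsto (htend (π A)) (Eventually.of_forall fun n => ?_)
      calc π' A = e * ∑ k ∈ Finset.range n, μ k A + iter π' n A := happ n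
        _ ≤ e * ∑' k, μ k A + (1 - e) ^ n := by
            gcongr
            · exact ENNReal.sum_le_tsum _
            · exact iter_le π' measure_univ n A
        _ = π A + (1 - e) ^ n := by rw [hπapp A hA]
    · refine ge_of_tendsto (htend (π' A)) (Eventually.of_forall fun n => ?_)
      calc π A = e * ∑ k ∈ Finset.range n, μ k A + e * ∑' k, μ (k + n) A := hπsplit n A hA
        _ ≤ π' A + (1 - e) ^ n := by
            gcongr
            · calc e * ∑ k ∈ Finset.range n, μ k A
                  ≤ e * ∑ k ∈ Finset.range n, μ k A + iter π' n A := le_self_add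
                _ = π' A := (happ n).symm
            · exact htailA n A
  -- TV bound
  refine ⟨π, hπprob, hinv, huniq, fun θ n _ => ?_⟩
  have hpow1 : (((1 : ENNReal) - e) ^ n) ≠ ⊤ :=
    ((pow_le_one₀ zero_le' tsub_le_self).trans_lt ENNReal.one_lt_top).ne
  have hEr : (((1 : ENNReal) - e) ^ n).toReal = (1 - ε) ^ n := by
    rw [ENNReal.toReal_pow]
    congr 1
    rw [he, ← ENNReal.ofReal_one, ← ENNReal.ofReal_sub _ hε.le, ENNReal.toReal_ofReal
      (by linarith)]
  have habs : ∀ c a b : ENNReal, c ≠ ⊤ → a ≤ (1 - e) ^ n → b ≤ (1 - e) ^ n →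
      |(c + a).toReal - (c + b).toReal| ≤ (1 - ε) ^ n := by
    intro c a b hcT haB hbB
    have haT : a ≠ ⊤ := (haB.trans_lt hpow1.lt_top).ne
    have hbT : b ≠ ⊤ := (hbB.trans_lt hpow1.lt_top).ne
    rw [ENNReal.toReal_add hcT haT, ENNReal.toReal_add hcT hbT]
    have h1 : a.toReal ≤ (1 - ε) ^ n := hEr ▸ ENNReal.toReal_mono hpow1 haB
    have h2 : b.toReal ≤ (1 - ε) ^ n := hEr ▸ ENNReal.toReal_mono hpow1 hbB
    have h3 : (0:ℝ) ≤ a.toReal := ENNReal.toReal_nonneg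
    have h4 : (0:ℝ) ≤ b.toReal := ENNReal.toReal_nonneg
    rw [abs_sub_le_iff]
    constructor <;> linarith
  haveI : Nonempty {A : Set Θ // MeasurableSet A} := ⟨⟨∅, MeasurableSet.empty⟩⟩
  refine ciSup_le fun B => ?_
  obtain ⟨A, hA⟩ := B
  have hnA : (nStep T n θ) A
      = e * ∑ k ∈ Finset.range n, μ k A + iter (Measure.dirac θ) n A := by
    rw [hnstepM θ n, Measure.add_apply, Measure.smul_apply, Measure.finset_sum_apply,
      smul_eq_mul]
  show |((nStep T n θ) A).toReal - (π A).toReal| ≤ (1 - ε) ^ n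
  rw [hnA, hπsplit n A hA]
  exact habs _ _ _ ((hhead_le n A hA).trans_lt ENNReal.one_lt_top).ne
    (iter_le (Measure.dirac θ) (by simp) n A) (htailA n A)
end

section
/- Let T and T_I be two Metropolis–Hastings-type kernels that share the same proposal kernel q(θ,·) and the same acceptance function α(θ,θ*, S_y) ∈ [0,1], but where the auxiliary variable S_y is drawn from distributions h(·|θ*) in T and g(·|θ*) in T_I respectively. If ‖h(·|θ*) − g(·|θ*)‖_TV ≤ δ for all θ*, then for every θ, ‖T(θ,·) − T_I(θ,·)‖_TV ≤ 2δ. -/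
open MeasureTheory ProbabilityTheory

lemma abs_meas_diff_le_tvDist {X : Type*} [MeasurableSpace X] (μ ν : Measure X)
    [IsProbabilityMeasure μ] [IsProbabilityMeasure ν] {A : Set X} (hA : MeasurableSet A) :
    |(μ A).toReal - (ν A).toReal| ≤ tvDist μ ν := by
  refine le_ciSup_of_le ?_ (⟨A, hA⟩ : {A : Set X // MeasurableSet A}) le_rfl
  refine ⟨1, ?_⟩
  rintro x ⟨⟨B, hB⟩, rfl⟩
  have h1 : (μ B).toReal ≤ 1 := by
    have := ENNReal.toReal_mono ENNReal.one_ne_top (prob_le_one (μ := μ) (s := B))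
    simpa using this
  have h2 : (ν B).toReal ≤ 1 := by
    have := ENNReal.toReal_mono ENNReal.one_ne_top (prob_le_one (μ := ν) (s := B))
    simpa using this
  have h3 : (0:ℝ) ≤ (μ B).toReal := ENNReal.toReal_nonneg
  have h4 : (0:ℝ) ≤ (ν B).toReal := ENNReal.toReal_nonneg
  rw [abs_sub_le_iff]
  constructor <;> linarith

lemma integral_diff_le_tvDist {X : Type*} [MeasurableSpace X] (μ ν : Measure X)
    [IsProbabilityMeasure μ] [IsProbabilityMeasure ν] {β : X → ℝ}
    (hβ : Measurable β) (h0 : ∀ s, 0 ≤ β s) (h1 : ∀ s, β s ≤ 1)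
    {δ : ℝ} (hTV : tvDist μ ν ≤ δ) :
    |∫ s, β s ∂μ - ∫ s, β s ∂ν| ≤ δ := by
  have hint : ∀ (ρ : Measure X) [IsProbabilityMeasure ρ], Integrable β ρ := by
    intro ρ _
    refine ⟨hβ.aestronglyMeasurable, ?_⟩
    refine HasFiniteIntegral.of_bounded (C := 1) (Filter.Eventually.of_forall fun s => ?_)
    rw [Real.norm_eq_abs, abs_le]
    exact ⟨by linarith [h0 s], h1 s⟩
  rw [(hint μ).integral_eq_integral_Ioc_meas_le (Filter.Eventually.of_forall h0)
      (Filter.Eventually.of_forall h1),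
    (hint ν).integral_eq_integral_Ioc_meas_le (Filter.Eventually.of_forall h0)
      (Filter.Eventually.of_forall h1)]
  have hmeas : ∀ ρ : Measure X, Measurable fun t : ℝ => (ρ {a | t ≤ β a}).toReal := by
    intro ρ
    have hanti : Antitone (fun t : ℝ => ρ {a | t ≤ β a}) :=
      fun s t hst => measure_mono fun a ha => le_trans hst ha
    exact hanti.measurable.ennreal_toReal
  have hintF : ∀ (ρ : Measure X) [IsProbabilityMeasure ρ],
      Integrable (fun t : ℝ => (ρ {a | t ≤ β a}).toReal)
        (volume.restrict (Set.Ioc (0:ℝ) 1)) := by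
    intro ρ _
    refine ⟨(hmeas ρ).aestronglyMeasurable, ?_⟩
    refine HasFiniteIntegral.of_bounded (C := 1) (Filter.Eventually.of_forall fun t => ?_)
    rw [Real.norm_eq_abs, abs_of_nonneg ENNReal.toReal_nonneg]
    have := ENNReal.toReal_mono ENNReal.one_ne_top (prob_le_one (μ := ρ) (s := {a | t ≤ β a}))
    simpa using this
  simp only [Measure.real]
  rw [← integral_sub (hintF μ) (hintF ν)]
  have key : ‖∫ t in Set.Ioc (0:ℝ) 1,
      ((μ {a | t ≤ β a}).toReal - (ν {a | t ≤ β a}).toReal)‖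
      ≤ δ * ((volume.restrict (Set.Ioc (0:ℝ) 1)) Set.univ).toReal := by
    refine norm_integral_le_of_norm_le_const (Filter.Eventually.of_forall fun t => ?_)
    rw [Real.norm_eq_abs]
    exact le_trans (abs_meas_diff_le_tvDist μ ν (hβ measurableSet_Ici)) hTV
  rw [Real.norm_eq_abs] at key
  calc |∫ t in Set.Ioc (0:ℝ) 1, ((μ {a | t ≤ β a}).toReal - (ν {a | t ≤ β a}).toReal)|
      ≤ δ * ((volume.restrict (Set.Ioc (0:ℝ) 1)) Set.univ).toReal := key
    _ = δ := by simp

/-- The Metropolis–Hastings-type kernel (as a set function) with proposal `q`,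
auxiliary-variable distribution `h(·|θ*)` and acceptance function `α(θ,θ*,s)`:
`T(θ,A) = ∫∫ α(θ,θ*,s) 1_A(θ*) + (1−α(θ,θ*,s)) 1_A(θ) dh(s|θ*) dq(θ*|θ)`. -/
noncomputable def mhAux {Θ X : Type*} [MeasurableSpace Θ] [MeasurableSpace X]
    (q : Kernel Θ Θ) (h : Kernel Θ X) (α : Θ → Θ → X → ℝ) (θ : Θ) (A : Set Θ) : ℝ :=
  ∫ θs, ∫ s, (α θ θs s * A.indicator (fun _ => (1:ℝ)) θs
      + (1 - α θ θs s) * A.indicator (fun _ => (1:ℝ)) θ) ∂(h θs) ∂(q θ)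

/-- If two Metropolis–Hastings-type kernels share the proposal `q` and acceptance
function `α`, but draw the auxiliary variable from `h(·|θ*)` resp. `g(·|θ*)` with
`‖h(·|θ*) − g(·|θ*)‖_TV ≤ δ` for all `θ*`, then `‖T(θ,·) − T_I(θ,·)‖_TV ≤ 2δ`. -/
theorem stmt2 {Θ X : Type*} [MeasurableSpace Θ] [MeasurableSpace X]
    (q : Kernel Θ Θ) [IsMarkovKernel q]
    (h g : Kernel Θ X) [IsMarkovKernel h] [IsMarkovKernel g]
    (α : Θ → Θ → X → ℝ)
    (hαmeas : Measurable fun p : Θ × Θ × X => α p.1 p.2.1 p.2.2)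
    (hα01 : ∀ θ θs s, α θ θs s ∈ Set.Icc (0 : ℝ) 1)
    (δ : ℝ) (hδ : 0 ≤ δ)
    (hTV : ∀ θs : Θ, tvDist (h θs) (g θs) ≤ δ) :
    ∀ θ : Θ, ∀ A : Set Θ, MeasurableSet A →
      |mhAux q h α θ A - mhAux q g α θ A| ≤ 2 * δ := by
  intro θ A hA
  set ind : Θ → ℝ := A.indicator (fun _ => (1:ℝ)) with hind
  -- inner integrand
  set F : Θ → X → ℝ := fun θs s => α θ θs s * ind θs + (1 - α θ θs s) * ind θ with hF
  have hαm : ∀ θs, Measurable fun s => α θ θs s := by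
    intro θs
    exact hαmeas.comp (measurable_const.prodMk (measurable_const.prodMk measurable_id))
  have hαint : ∀ θs, ∀ (ρ : Measure X) [IsProbabilityMeasure ρ],
      Integrable (fun s => α θ θs s) ρ := by
    intro θs ρ _
    refine ⟨(hαm θs).aestronglyMeasurable, ?_⟩
    refine HasFiniteIntegral.of_bounded (C := 1) (Filter.Eventually.of_forall fun s => ?_)
    rw [Real.norm_eq_abs, abs_le]
    exact ⟨by linarith [(hα01 θ θs s).1], (hα01 θ θs s).2⟩
  -- compute the inner integral
  have hcalc : ∀ θs, ∀ (ρ : Measure X) [IsProbabilityMeasure ρ],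
      ∫ s, F θs s ∂ρ = (ind θs - ind θ) * (∫ s, α θ θs s ∂ρ) + ind θ := by
    intro θs ρ _
    have heq : (fun s => F θs s) = fun s => (ind θs - ind θ) * α θ θs s + ind θ := by
      funext s; simp only [hF]; ring
    rw [heq, integral_add (((hαint θs ρ).const_mul _)) (integrable_const _),
      integral_const_mul, integral_const]
    simp
  -- pointwise bound on inner difference
  have hptwise : ∀ θs, |(∫ s, F θs s ∂(h θs)) - (∫ s, F θs s ∂(g θs))| ≤ δ := by
    intro θs
    rw [hcalc θs (h θs), hcalc θs (g θs)]
    have habs : |ind θs - ind θ| ≤ 1 := by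
      simp only [hind]
      by_cases h1 : θs ∈ A <;> by_cases h2 : θ ∈ A <;> simp [h1, h2]
    have hkey : |(∫ s, α θ θs s ∂(h θs)) - (∫ s, α θ θs s ∂(g θs))| ≤ δ :=
      integral_diff_le_tvDist (h θs) (g θs) (hαm θs)
        (fun s => (hα01 θ θs s).1) (fun s => (hα01 θ θs s).2) (hTV θs)
    have : (ind θs - ind θ) * (∫ s, α θ θs s ∂(h θs)) + ind θ -
        ((ind θs - ind θ) * (∫ s, α θ θs s ∂(g θs)) + ind θ)
        = (ind θs - ind θ) * ((∫ s, α θ θs s ∂(h θs)) - (∫ s, α θ θs s ∂(g θs))) := by ring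
    rw [this, abs_mul]
    calc |ind θs - ind θ| * |(∫ s, α θ θs s ∂(h θs)) - (∫ s, α θ θs s ∂(g θs))|
        ≤ 1 * δ := mul_le_mul habs hkey (abs_nonneg _) zero_le_one
      _ = δ := one_mul δ
  -- measurability and integrability of outer integrands
  have hFmeas : StronglyMeasurable (Function.uncurry F) := by
    apply Measurable.stronglyMeasurable
    simp only [hF, Function.uncurry]
    have h1 : Measurable fun p : Θ × X => α θ p.1 p.2 :=
      hαmeas.comp (measurable_const.prodMk measurable_id)
    have h2 : Measurable fun p : Θ × X => ind p.1 :=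
      ((measurable_const.indicator hA : Measurable ind)).comp measurable_fst
    exact (h1.mul h2).add ((measurable_const.sub h1).mul measurable_const)
  have houter : ∀ (κ : Kernel Θ X) [IsMarkovKernel κ],
      Integrable (fun θs => ∫ s, F θs s ∂(κ θs)) (q θ) := by
    intro κ _
    refine ⟨(StronglyMeasurable.integral_kernel_prod_right' (κ := κ) hFmeas).aestronglyMeasurable, ?_⟩
    refine HasFiniteIntegral.of_bounded (C := 1) (Filter.Eventually.of_forall fun θs => ?_)
    calc ‖∫ s, F θs s ∂(κ θs)‖
        ≤ 1 * ((κ θs) Set.univ).toReal := by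
          refine norm_integral_le_of_norm_le_const (Filter.Eventually.of_forall fun s => ?_)
          rw [Real.norm_eq_abs, abs_le]
          simp only [hF, hind]
          constructor
          · by_cases h1 : θs ∈ A <;> by_cases h2 : θ ∈ A <;> simp [h1, h2] <;>
              nlinarith [(hα01 θ θs s).1, (hα01 θ θs s).2]
          · by_cases h1 : θs ∈ A <;> by_cases h2 : θ ∈ A <;> simp [h1, h2] <;>
              nlinarith [(hα01 θ θs s).1, (hα01 θ θs s).2]
      _ = 1 := by simp
  -- conclude
  have hdiff : mhAux q h α θ A - mhAux q g α θ A
      = ∫ θs, ((∫ s, F θs s ∂(h θs)) - (∫ s, F θs s ∂(g θs))) ∂(q θ) := by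
    rw [integral_sub (houter h) (houter g)]
    rfl
  rw [hdiff]
  calc |∫ θs, ((∫ s, F θs s ∂(h θs)) - (∫ s, F θs s ∂(g θs))) ∂(q θ)|
      ≤ δ * ((q θ) Set.univ).toReal := by
        rw [← Real.norm_eq_abs]
        refine norm_integral_le_of_norm_le_const (Filter.Eventually.of_forall fun θs => ?_)
        rw [Real.norm_eq_abs]
        exact hptwise θs
    _ = δ := by simp
    _ ≤ 2 * δ := by linarith
end

section
/- Suppose a Markov kernel T has invariant distribution π and satisfies the geometric convergence bound ‖Tⁿ(θ₀,·) − π‖_TV ≤ ρⁿ for some ρ ∈ (0,1). Suppose T̂ is another Markov kernel with sup_θ ‖T(θ,·) − T̂(θ,·)‖_TV ≤ ε. Then for all n ≥ 1, ‖T̂ⁿ(θ₀,·) − π‖_TV ≤ ρⁿ + n·ε. -/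
open MeasureTheory ProbabilityTheory
open scoped ENNReal NNReal

section aux
variable {Θ : Type*} [MeasurableSpace Θ]

lemma tvDist_bdd (μ ν : Measure Θ) [IsFiniteMeasure μ] [IsFiniteMeasure ν] :
    BddAbove (Set.range fun A : {A : Set Θ // MeasurableSet A} =>
      |(μ A).toReal - (ν A).toReal|) := by
  refine ⟨(μ Set.univ).toReal + (ν Set.univ).toReal, ?_⟩
  rintro x ⟨A, rfl⟩
  have h1 : (μ A).toReal ≤ (μ Set.univ).toReal :=
    ENNReal.toReal_mono (measure_ne_top _ _) (measure_mono (Set.subset_univ _))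
  have h2 : (ν A).toReal ≤ (ν Set.univ).toReal :=
    ENNReal.toReal_mono (measure_ne_top _ _) (measure_mono (Set.subset_univ _))
  calc |(μ A).toReal - (ν A).toReal| ≤ |(μ A).toReal| + |(ν A).toReal| := abs_sub _ _
    _ = (μ A).toReal + (ν A).toReal := by
        rw [abs_of_nonneg ENNReal.toReal_nonneg, abs_of_nonneg ENNReal.toReal_nonneg]
    _ ≤ _ := add_le_add h1 h2

lemma abs_le_tvDist (μ ν : Measure Θ) [IsFiniteMeasure μ] [IsFiniteMeasure ν]
    {A : Set Θ} (hA : MeasurableSet A) :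
    |(μ A).toReal - (ν A).toReal| ≤ tvDist μ ν :=
  le_ciSup (tvDist_bdd μ ν) (⟨A, hA⟩ : {A : Set Θ // MeasurableSet A})

lemma tvDist_le (μ ν : Measure Θ) {c : ℝ}
    (h : ∀ A : Set Θ, MeasurableSet A → |(μ A).toReal - (ν A).toReal| ≤ c) :
    tvDist μ ν ≤ c :=
  ciSup_le fun A => h A.1 A.2

lemma tvDist_nonneg (μ ν : Measure Θ) [IsFiniteMeasure μ] [IsFiniteMeasure ν] :
    0 ≤ tvDist μ ν :=
  le_trans (abs_nonneg _) (abs_le_tvDist μ ν MeasurableSet.empty)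

lemma tvDist_comm (μ ν : Measure Θ) : tvDist μ ν = tvDist ν μ := by
  unfold tvDist
  congr 1; funext A; rw [abs_sub_comm]

lemma tvDist_self (μ : Measure Θ) [IsFiniteMeasure μ] : tvDist μ μ = 0 :=
  le_antisymm (tvDist_le μ μ (by simp)) (tvDist_nonneg μ μ)

lemma tvDist_triangle (μ κ ν : Measure Θ) [IsFiniteMeasure μ] [IsFiniteMeasure κ]
    [IsFiniteMeasure ν] : tvDist μ ν ≤ tvDist μ κ + tvDist κ ν := by
  refine tvDist_le μ ν fun A hA => ?_
  calc |(μ A).toReal - (ν A).toReal|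
      ≤ |(μ A).toReal - (κ A).toReal| + |(κ A).toReal - (ν A).toReal| := abs_sub_le _ _ _
    _ ≤ tvDist μ κ + tvDist κ ν := add_le_add (abs_le_tvDist μ κ hA) (abs_le_tvDist κ ν hA)

lemma toReal_abs_sub_le {a b : ℝ≥0∞} (ha : a ≠ ⊤) (hb : b ≠ ⊤) {d : ℝ} (hd : 0 ≤ d)
    (h1 : a ≤ b + ENNReal.ofReal d) (h2 : b ≤ a + ENNReal.ofReal d) :
    |a.toReal - b.toReal| ≤ d := by
  have k1 : a.toReal ≤ b.toReal + d := by
    calc a.toReal ≤ (b + ENNReal.ofReal d).toReal := ENNReal.toReal_mono (by simp [hb]) h1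
      _ = b.toReal + d := by
          rw [ENNReal.toReal_add hb ENNReal.ofReal_ne_top, ENNReal.toReal_ofReal hd]
  have k2 : b.toReal ≤ a.toReal + d := by
    calc b.toReal ≤ (a + ENNReal.ofReal d).toReal := ENNReal.toReal_mono (by simp [ha]) h2
      _ = a.toReal + d := by
          rw [ENNReal.toReal_add ha ENNReal.ofReal_ne_top, ENNReal.toReal_ofReal hd]
  rw [abs_sub_le_iff]
  constructor <;> linarith

lemma le_add_ofReal {a b : ℝ≥0∞} (ha : a ≠ ⊤) (hb : b ≠ ⊤) {d : ℝ}
    (h : |a.toReal - b.toReal| ≤ d) : a ≤ b + ENNReal.ofReal d := by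
  have hd : 0 ≤ d := le_trans (abs_nonneg _) h
  have h' : a.toReal ≤ b.toReal + d := by
    have := abs_le.1 h
    linarith [this.2]
  calc a = ENNReal.ofReal a.toReal := (ENNReal.ofReal_toReal ha).symm
    _ ≤ ENNReal.ofReal (b.toReal + d) := ENNReal.ofReal_le_ofReal h'
    _ = ENNReal.ofReal b.toReal + ENNReal.ofReal d :=
        ENNReal.ofReal_add ENNReal.toReal_nonneg hd
    _ = b + ENNReal.ofReal d := by rw [ENNReal.ofReal_toReal hb]

end aux

section core
variable {Θ : Type*} [MeasurableSpace Θ]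

lemma bind_apply_le (μ ν : Measure Θ) [IsFiniteMeasure μ] [IsFiniteMeasure ν]
    (K : Kernel Θ Θ) [IsMarkovKernel K] {A : Set Θ} (hA : MeasurableSet A) :
    (μ.bind K) A ≤ (ν.bind K) A + ENNReal.ofReal (tvDist μ ν) := by
  obtain ⟨S, hS, hSpos, hSneg⟩ := hahn_decomposition (μ := μ) (ν := ν)
  set g : Θ → ℝ≥0∞ := fun θ => K θ A with hg_def
  have hg : Measurable g := K.measurable_coe hA
  have hg1 : ∀ θ, g θ ≤ 1 := fun θ => prob_le_one
  -- restrict comparisons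
  have hres : μ.restrict Sᶜ ≤ ν.restrict Sᶜ := by
    refine Measure.le_iff.2 fun s hs => ?_
    rw [Measure.restrict_apply hs, Measure.restrict_apply hs]
    exact hSneg _ (hs.inter hS.compl) Set.inter_subset_right
  have hres' : ν.restrict S ≤ μ.restrict S := by
    refine Measure.le_iff.2 fun s hs => ?_
    rw [Measure.restrict_apply hs, Measure.restrict_apply hs]
    exact hSpos _ (hs.inter hS) Set.inter_subset_right
  have hsplit : ∀ ρ : Measure Θ, ∫⁻ θ in S, g θ ∂ρ + ∫⁻ θ in S, (1 - g θ) ∂ρ = ρ S := by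
    intro ρ
    rw [← lintegral_add_left (hg.mono le_rfl le_rfl)]
    have : ∀ θ, g θ + (1 - g θ) = 1 := fun θ => add_tsub_cancel_of_le (hg1 θ)
    simp only [this]
    simp
  -- key inequality on S
  have hSkey : ∫⁻ θ in S, g θ ∂μ + ν S ≤ ∫⁻ θ in S, g θ ∂ν + μ S := by
    have h1 : ∫⁻ θ in S, (1 - g θ) ∂ν ≤ ∫⁻ θ in S, (1 - g θ) ∂μ := lintegral_mono' hres' le_rfl
    calc ∫⁻ θ in S, g θ ∂μ + ν S
        = ∫⁻ θ in S, g θ ∂μ + (∫⁻ θ in S, g θ ∂ν + ∫⁻ θ in S, (1 - g θ) ∂ν) := by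
          rw [hsplit ν]
      _ ≤ ∫⁻ θ in S, g θ ∂ν + (∫⁻ θ in S, g θ ∂μ + ∫⁻ θ in S, (1 - g θ) ∂μ) := by
          rw [← add_assoc, ← add_assoc, add_comm (∫⁻ θ in S, g θ ∂μ)]
          exact add_le_add le_rfl h1
      _ = ∫⁻ θ in S, g θ ∂ν + μ S := by rw [hsplit μ]
  have hSckey : ∫⁻ θ in Sᶜ, g θ ∂μ ≤ ∫⁻ θ in Sᶜ, g θ ∂ν := lintegral_mono' hres le_rfl
  have hmuS : μ S ≤ ν S + ENNReal.ofReal (tvDist μ ν) :=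
    le_add_ofReal (measure_ne_top μ S) (measure_ne_top ν S) (abs_le_tvDist μ ν hS)
  have key : ∫⁻ θ, g θ ∂μ + ν S ≤ (∫⁻ θ, g θ ∂ν + ENNReal.ofReal (tvDist μ ν)) + ν S := by
    rw [← lintegral_add_compl g hS (μ := μ), ← lintegral_add_compl g hS (μ := ν)]
    calc ∫⁻ θ in S, g θ ∂μ + ∫⁻ θ in Sᶜ, g θ ∂μ + ν S
        = (∫⁻ θ in S, g θ ∂μ + ν S) + ∫⁻ θ in Sᶜ, g θ ∂μ := by ring
      _ ≤ (∫⁻ θ in S, g θ ∂ν + μ S) + ∫⁻ θ in Sᶜ, g θ ∂ν := add_le_add hSkey hSckey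
      _ ≤ (∫⁻ θ in S, g θ ∂ν + (ν S + ENNReal.ofReal (tvDist μ ν))) + ∫⁻ θ in Sᶜ, g θ ∂ν :=
          add_le_add (add_le_add le_rfl hmuS) le_rfl
      _ = ∫⁻ θ in S, g θ ∂ν + ∫⁻ θ in Sᶜ, g θ ∂ν + ENNReal.ofReal (tvDist μ ν) + ν S := by
          ring
  have key' : ∫⁻ θ, g θ ∂μ ≤ ∫⁻ θ, g θ ∂ν + ENNReal.ofReal (tvDist μ ν) :=
    (ENNReal.add_le_add_iff_right (measure_ne_top ν S)).1 key
  rw [Measure.bind_apply hA (Kernel.measurable K).aemeasurable, Measure.bind_apply hA (Kernel.measurable K).aemeasurable]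
  exact key'

lemma lintegral_K_ne_top (μ : Measure Θ) [IsFiniteMeasure μ]
    (K : Kernel Θ Θ) [IsMarkovKernel K] {A : Set Θ} (hA : MeasurableSet A) :
    (μ.bind K) A ≠ ⊤ := by
  rw [Measure.bind_apply hA (Kernel.measurable K).aemeasurable]
  refine ne_top_of_le_ne_top (measure_ne_top μ Set.univ) ?_
  calc ∫⁻ θ, (K θ) A ∂μ ≤ ∫⁻ _, 1 ∂μ := lintegral_mono fun θ => prob_le_one
    _ = μ Set.univ := by simp

lemma tvDist_bind_le (μ ν : Measure Θ) [IsFiniteMeasure μ] [IsFiniteMeasure ν]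
    (K : Kernel Θ Θ) [IsMarkovKernel K] :
    tvDist (μ.bind K) (ν.bind K) ≤ tvDist μ ν := by
  refine tvDist_le _ _ fun A hA => ?_
  exact toReal_abs_sub_le (lintegral_K_ne_top μ K hA) (lintegral_K_ne_top ν K hA)
    (tvDist_nonneg μ ν) (bind_apply_le μ ν K hA) (by
      rw [tvDist_comm μ ν]; exact bind_apply_le ν μ K hA)

lemma tvDist_bind_close (μ : Measure Θ) [IsProbabilityMeasure μ]
    (T That : Kernel Θ Θ) [IsMarkovKernel T] [IsMarkovKernel That]
    {ε : ℝ} (hε : 0 ≤ ε) (hclose : ∀ θ : Θ, tvDist (T θ) (That θ) ≤ ε) :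
    tvDist (μ.bind T) (μ.bind That) ≤ ε := by
  refine tvDist_le _ _ fun A hA => ?_
  have hpt : ∀ θ : Θ, |((T θ) A).toReal - ((That θ) A).toReal| ≤ ε := fun θ =>
    le_trans (abs_le_tvDist (T θ) (That θ) hA) (hclose θ)
  have step : ∀ (K L : Kernel Θ Θ), ∀ _ : IsMarkovKernel K, ∀ _ : IsMarkovKernel L,
      (∀ θ, (K θ) A ≤ (L θ) A + ENNReal.ofReal ε) →
      (μ.bind K) A ≤ (μ.bind L) A + ENNReal.ofReal ε := by
    intro K L _ _ hKL
    rw [Measure.bind_apply hA (Kernel.measurable K).aemeasurable, Measure.bind_apply hA (Kernel.measurable L).aemeasurable]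
    calc ∫⁻ θ, (K θ) A ∂μ ≤ ∫⁻ θ, ((L θ) A + ENNReal.ofReal ε) ∂μ := lintegral_mono hKL
      _ = ∫⁻ θ, (L θ) A ∂μ + ENNReal.ofReal ε := by
          rw [lintegral_add_right _ measurable_const]
          simp
  refine toReal_abs_sub_le (lintegral_K_ne_top μ T hA) (lintegral_K_ne_top μ That hA) hε
    (step T That inferInstance inferInstance fun θ =>
      le_add_ofReal (measure_ne_top _ _) (measure_ne_top _ _) (hpt θ))
    (step That T inferInstance inferInstance fun θ =>
      le_add_ofReal (measure_ne_top _ _) (measure_ne_top _ _) (by rw [abs_sub_comm]; exact hpt θ))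

instance nStep_markov (T : Kernel Θ Θ) [IsMarkovKernel T] (n : ℕ) :
    IsMarkovKernel (nStep T n) := by
  induction n with
  | zero => rw [nStep]; infer_instance
  | succ n ih => rw [nStep]; infer_instance

end core

lemma bind_isProb {Θ : Type*} [MeasurableSpace Θ] (μ : Measure Θ) [IsProbabilityMeasure μ]
    (K : Kernel Θ Θ) [IsMarkovKernel K] : IsProbabilityMeasure (μ.bind K) :=
  ⟨by rw [Measure.bind_apply MeasurableSet.univ (Kernel.measurable K).aemeasurable]; simp⟩

/-- Perturbation bound: if `T` is geometrically ergodic towards its invariant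
distribution `π` with rate `ρ`, and `T̂` is uniformly `ε`-close to `T` in total
variation, then `‖T̂ⁿ(θ₀,·) − π‖_TV ≤ ρⁿ + n·ε` for all `n ≥ 1`. -/
theorem stmt3 {Θ : Type*} [MeasurableSpace Θ]
    (T That : Kernel Θ Θ) [IsMarkovKernel T] [IsMarkovKernel That]
    (π : Measure Θ) [IsProbabilityMeasure π]
    (hinv : π.bind (fun θ => T θ) = π)
    (ρ : ℝ) (hρ0 : 0 < ρ) (hρ1 : ρ < 1)
    (θ₀ : Θ)
    (hgeo : ∀ n : ℕ, 1 ≤ n → tvDist (nStep T n θ₀) π ≤ ρ ^ n)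
    (ε : ℝ) (hε : 0 ≤ ε)
    (hclose : ∀ θ : Θ, tvDist (T θ) (That θ) ≤ ε) :
    ∀ n : ℕ, 1 ≤ n → tvDist (nStep That n θ₀) π ≤ ρ ^ n + n * ε := by
  have hcomp : ∀ n : ℕ, tvDist (nStep That n θ₀) (nStep T n θ₀) ≤ n * ε := by
    intro n
    induction n with
    | zero =>
      rw [nStep, nStep]
      simp [tvDist_self]
    | succ n ih =>
      have e1 : nStep That (n + 1) θ₀ = (nStep That n θ₀).bind That := by
        rw [nStep, Kernel.comp_apply]
      have e2 : nStep T (n + 1) θ₀ = (nStep T n θ₀).bind T := by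
        rw [nStep, Kernel.comp_apply]
      rw [e1, e2]
      haveI h1 := bind_isProb (nStep That n θ₀) That
      haveI h2 := bind_isProb (nStep That n θ₀) T
      haveI h3 := bind_isProb (nStep T n θ₀) T
      calc tvDist ((nStep That n θ₀).bind That) ((nStep T n θ₀).bind T)
          ≤ tvDist ((nStep That n θ₀).bind That) ((nStep That n θ₀).bind T)
            + tvDist ((nStep That n θ₀).bind T) ((nStep T n θ₀).bind T) :=
            tvDist_triangle _ _ _
        _ ≤ ε + n * ε := add_le_add
            (by rw [tvDist_comm]; exact tvDist_bind_close _ T That hε hclose)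
            ((tvDist_bind_le _ _ T).trans ih)
        _ = (n + 1 : ℕ) * ε := by push_cast; ring
  intro n hn
  have := tvDist_triangle (nStep That n θ₀) (nStep T n θ₀) π
  have h2 := hgeo n hn
  have h3 := hcomp n
  linarith
end
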